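/- For every natural number n ≥ 1, ∑_{i=1}^{n} H_i·H_{n+1−i} = (n+2)(H_{n+1}² − H_{n+1}^{(2)}) − 2(n+1)(H_{n+1} − 1), where H_k is the k-th harmonic number and H_k^{(2)} is the k-th harmonic number of order 2. -/

import Mathlib

open Finset

noncomputable def H (n : ℕ) : ℝ := ∑ i ∈ Finset.Icc 1 n, (1:ℝ)/i
noncomputable def H2 (n : ℕ) : ℝ := ∑ i ∈ Finset.Icc 1 n, (1:ℝ)/(i:ℝ)^2

lemma H_zero : H 0 = 0 := by simp [H]

lemma H_succ (n : ℕ) : H (n+1) = H n + 1/((n:ℝ)+1) := by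
  rw [H, H, Finset.sum_Icc_succ_top (by omega)]
  push_cast; ring

lemma H2_succ (n : ℕ) : H2 (n+1) = H2 n + 1/((n:ℝ)+1)^2 := by
  rw [H2, H2, Finset.sum_Icc_succ_top (by omega)]
  push_cast; ring

lemma sum_reflect (f : ℕ → ℝ) (m : ℕ) :
    ∑ k ∈ Icc 1 m, f (m+1-k) = ∑ k ∈ Icc 1 m, f k := by
  refine Finset.sum_nbij' (fun k => m+1-k) (fun k => m+1-k) ?_ ?_ ?_ ?_ ?_ <;>
    intro a ha <;> simp only [Finset.mem_Icc] at * <;> first | omega | rfl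

lemma sum_shift (p : ℕ → ℝ) (m : ℕ) (h0 : p 0 = 0) :
    ∑ k ∈ Icc 1 (m+1), p (k-1) = ∑ j ∈ Icc 1 m, p j := by
  have h1 : ∑ k ∈ Icc 1 (m+1), p (k-1) = ∑ j ∈ Icc 0 m, p j := by
    refine Finset.sum_nbij' (fun k => k-1) (fun j => j+1) ?_ ?_ ?_ ?_ ?_ <;>
      intro a ha <;> simp only [Finset.mem_Icc] at * <;> first | omega | rfl
  have h2 : Finset.Icc 0 m = insert 0 (Finset.Icc 1 m) := by
    ext x; simp only [Finset.mem_Icc, Finset.mem_insert]; omega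
  rw [h1, h2, Finset.sum_insert (by simp), h0, zero_add]

lemma lemA (n : ℕ) :
    ∑ k ∈ Icc 1 n, H k / ((n+1-k : ℕ) : ℝ) = (H (n+1))^2 - H2 (n+1) := by
  induction n with
  | zero => simp [H, H2]
  | succ n ih =>
    have key : ∀ k ∈ Icc 1 (n+1),
        H k / ((n+2-k : ℕ) : ℝ) = H (k-1) / ((n+1-(k-1) : ℕ) : ℝ)
          + (1/(((n:ℝ)+2)) * (1/(k:ℝ) + 1/(((n+2-k : ℕ)):ℝ))) := by
      intro k hk
      simp only [Finset.mem_Icc] at hk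
      obtain ⟨hk1, hk2⟩ := hk
      have hH : H k = H (k-1) + 1/((k:ℝ)) := by
        have := H_succ (k-1)
        have hk' : k - 1 + 1 = k := by omega
        rw [hk'] at this
        rw [this]
        congr 1
        push_cast [hk']
        ring_nf
        rw [Nat.cast_sub hk1]
        push_cast; ring
      have e1 : n+1-(k-1) = n+2-k := by omega
      have hc : ((n+2-k : ℕ) : ℝ) = (n:ℝ)+2-(k:ℝ) := by
        push_cast [Nat.cast_sub (by omega : k ≤ n+2)]; ring
      rw [hH, e1, hc]
      have hk0 : (k:ℝ) ≠ 0 := by positivity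
      have hnk : (n:ℝ)+2-(k:ℝ) ≠ 0 := by
        have : (k:ℝ) ≤ (n:ℝ)+1 := by exact_mod_cast hk2
        nlinarith
      field_simp
      ring
    rw [Finset.sum_congr rfl key, Finset.sum_add_distrib]
    have s1 : ∑ k ∈ Icc 1 (n+1), H (k-1) / ((n+1-(k-1) : ℕ) : ℝ)
        = (H (n+1))^2 - H2 (n+1) := by
      rw [sum_shift (fun j => H j / ((n+1-j : ℕ):ℝ)) n (by simp [H_zero])]
      exact ih
    have s2 : ∑ k ∈ Icc 1 (n+1), (1/(((n:ℝ)+2)) * (1/(k:ℝ) + 1/(((n+2-k : ℕ)):ℝ)))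
        = 2/((n:ℝ)+2) * H (n+1) := by
      rw [← Finset.mul_sum, Finset.sum_add_distrib]
      have r : ∑ k ∈ Icc 1 (n+1), 1/(((n+2-k : ℕ)):ℝ) = H (n+1) := by
        have := sum_reflect (fun j => 1/((j:ℕ):ℝ)) (n+1)
        rw [H]
        rw [← this]
      rw [r]
      have : ∑ k ∈ Icc 1 (n+1), 1/((k:ℕ):ℝ) = H (n+1) := by rw [H]
      rw [this]
      ring
    rw [s1, s2, H_succ (n+1), H2_succ (n+1)]
    have h2 : ((n:ℝ)+1+1) ≠ 0 := by positivity
    field_simp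
    push_cast
    ring

theorem stmt7 (n : ℕ) (hn : 1 ≤ n) :
    ∑ i ∈ Icc 1 n, H i * H (n+1-i)
      = ((n:ℝ)+2)*((H (n+1))^2 - H2 (n+1)) - 2*((n:ℝ)+1)*(H (n+1) - 1) := by
  clear hn
  induction n with
  | zero => simp [H, H2]
  | succ n ih =>
    have key : ∀ i ∈ Icc 1 (n+1),
        H i * H (n+2-i) = H i * H (n+1-i) + H i / ((n+2-i : ℕ) : ℝ) := by
      intro i hi
      simp only [Finset.mem_Icc] at hi
      have e : n+2-i = (n+1-i)+1 := by omega
      rw [e, H_succ]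
      have : ((n+1-i : ℕ):ℝ) + 1 = ((n+1-i+1 : ℕ):ℝ) := by push_cast; ring
      rw [this, ← e]
      ring
    rw [Finset.sum_congr rfl key, Finset.sum_add_distrib]
    have s1 : ∑ i ∈ Icc 1 (n+1), H i * H (n+1-i) = ∑ i ∈ Icc 1 n, H i * H (n+1-i) := by
      rw [Finset.sum_Icc_succ_top (by omega)]
      simp [H_zero]
    have s2 : ∑ i ∈ Icc 1 (n+1), H i / ((n+2-i : ℕ) : ℝ)
        = (H (n+2))^2 - H2 (n+2) := by
      have := lemA (n+1)
      convert this using 2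
    rw [s1, s2, ih]
    rw [show n+2 = (n+1)+1 from rfl, H_succ (n+1), H2_succ (n+1)]
    push_cast
    have h2 : ((n:ℝ)+1+1) ≠ 0 := by positivity
    field_simp
    ring
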